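/- No two-input two-output quantum box gives rise to singular disagreement. That is, if p is a two-input two-output box that is quantum, then p does not give rise to singular disagreement. -/

import Mathlib

open Kronecker ComplexOrder

/-- A (bipartite) box: nonnegative entries, normalized for every input pair. -/
def IsBox {nA nB nX nY : ℕ} (p : Fin nA → Fin nB → Fin nX → Fin nY → ℝ) : Prop :=
  (∀ a b x y, 0 ≤ p a b x y) ∧ (∀ x y, (∑ a, ∑ b, p a b x y) = 1)

/-- No-signaling: each party's marginal does not depend on the other's input. -/
def NoSignaling {nA nB nX nY : ℕ} (p : Fin nA → Fin nB → Fin nX → Fin nY → ℝ) : Prop :=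
  (∀ b y x x', (∑ a, p a b x y) = ∑ a, p a b x' y) ∧
  (∀ a x y y', (∑ b, p a b x y) = ∑ b, p a b x y')

/-- Local (classical) box: a convex mixture of product deterministic/stochastic strategies. -/
def IsLocal {nA nB nX nY : ℕ} (p : Fin nA → Fin nB → Fin nX → Fin nY → ℝ) : Prop :=
  ∃ (Λ : ℕ) (w : Fin Λ → ℝ) (pA : Fin nA → Fin nX → Fin Λ → ℝ)
    (pB : Fin nB → Fin nY → Fin Λ → ℝ),
    (∀ l, 0 ≤ w l) ∧ ((∑ l, w l) = 1) ∧
    (∀ a x l, 0 ≤ pA a x l) ∧ (∀ x l, (∑ a, pA a x l) = 1) ∧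
    (∀ b y l, 0 ≤ pB b y l) ∧ (∀ y l, (∑ b, pB b y l) = 1) ∧
    (∀ a b x y, p a b x y = ∑ l, w l * pA a x l * pB b y l)

/-- Quantum box: realized by POVMs on a bipartite quantum state. -/
def IsQuantum {nA nB nX nY : ℕ} (p : Fin nA → Fin nB → Fin nX → Fin nY → ℝ) : Prop :=
  ∃ (dA dB : ℕ) (_ : 0 < dA) (_ : 0 < dB)
    (ρ : Matrix (Fin dA × Fin dB) (Fin dA × Fin dB) ℂ)
    (E : Fin nX → Fin nA → Matrix (Fin dA) (Fin dA) ℂ)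
    (F : Fin nY → Fin nB → Matrix (Fin dB) (Fin dB) ℂ),
    ρ.PosSemidef ∧ ρ.trace = 1 ∧
    (∀ x a, (E x a).PosSemidef) ∧ (∀ x, (∑ a, E x a) = 1) ∧
    (∀ y b, (F y b).PosSemidef) ∧ (∀ y, (∑ b, F y b) = 1) ∧
    (∀ a b x y, ((E x a ⊗ₖ F y b) * ρ).trace = (p a b x y : ℂ))

open Classical in
/-- The certainty hierarchy `(α_n, β_n)` of the agreement framework:
`α₀` are Alice's outputs (on input `x = 0`) from which she assigns conditional
probability `qA` to Bob outputting `1` on input `y = 1`; `β₀` is the analogue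
for Bob; and at each later stage each party is moreover certain (on inputs
`x = y = 0`) that the other's output lies in the previous stage's set. -/
noncomputable def alphaBeta {nA nB nX nY : ℕ} [NeZero nA] [NeZero nB] [NeZero nX] [NeZero nY]
    (p : Fin nA → Fin nB → Fin nX → Fin nY → ℝ) (qA qB : ℝ) :
    ℕ → Set (Fin nA) × Set (Fin nB)
  | 0 =>
      ({a | 0 < (∑ b, p a b 0 1) ∧ p a 1 0 1 = qA * (∑ b, p a b 0 1)},
       {b | 0 < (∑ a, p a b 1 0) ∧ p 1 b 1 0 = qB * (∑ a, p a b 1 0)})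
  | n + 1 =>
      ({a | a ∈ (alphaBeta p qA qB n).1 ∧ 0 < (∑ b, p a b 0 0) ∧
            (∑ b, if b ∈ (alphaBeta p qA qB n).2 then p a b 0 0 else 0) = ∑ b, p a b 0 0},
       {b | b ∈ (alphaBeta p qA qB n).2 ∧ 0 < (∑ a, p a b 0 0) ∧
            (∑ a, if a ∈ (alphaBeta p qA qB n).1 then p a b 0 0 else 0) = ∑ a, p a b 0 0})

open Fin.NatCast in
/-- The box gives rise to common certainty of disagreement: for some `qA ≠ qB` in `[0,1]`,
the outputs on inputs `x = y = 1` are perfectly correlated, the event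
`(a,b,x,y) = (0,0,0,0)` has positive probability, and `0 ∈ α_n`, `0 ∈ β_n` for every `n`. -/
def CommonCertaintyOfDisagreement {nA nB nX nY : ℕ}
    [NeZero nA] [NeZero nB] [NeZero nX] [NeZero nY]
    (p : Fin nA → Fin nB → Fin nX → Fin nY → ℝ) : Prop :=
  ∃ qA qB : ℝ, qA ∈ Set.Icc (0:ℝ) 1 ∧ qB ∈ Set.Icc (0:ℝ) 1 ∧ qA ≠ qB ∧
    (∀ a b, (a : ℕ) ≠ (b : ℕ) → p a b 1 1 = 0) ∧ 0 < p 0 0 0 0 ∧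
    (∀ n : ℕ, (0 : Fin nA) ∈ (alphaBeta p qA qB n).1 ∧ (0 : Fin nB) ∈ (alphaBeta p qA qB n).2)

open Fin.NatCast in
/-- The box gives rise to singular disagreement: perfectly correlated outputs on inputs
`x = y = 1`, positive probability of `(0,0,0,0)`, Alice assigns conditional probability
`qA = 1` to `b = 1` given `a = 0, x = 0, y = 1`, and Bob assigns conditional probability
`qB = 0` to `a = 1` given `b = 0, x = 1, y = 0`. -/
def SingularDisagreement {nA nB nX nY : ℕ}
    [NeZero nA] [NeZero nB] [NeZero nX] [NeZero nY]
    (p : Fin nA → Fin nB → Fin nX → Fin nY → ℝ) : Prop :=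
  (∀ a b, (a : ℕ) ≠ (b : ℕ) → p a b 1 1 = 0) ∧ 0 < p 0 0 0 0 ∧
  (0 < ∑ b, p 0 b 0 1) ∧ (p 0 1 0 1 = ∑ b, p 0 b 0 1) ∧
  (0 < ∑ a, p a 0 1 0) ∧ (p 1 0 1 0 = 0)


section Aux
open Matrix

lemma my_kronecker_sub {l m n p : Type*} (A : Matrix l m ℂ) (B C : Matrix n p ℂ) :
    A ⊗ₖ (B - C) = A ⊗ₖ B - A ⊗ₖ C := by
  ext ⟨i₁, i₂⟩ ⟨j₁, j₂⟩
  simp [Matrix.kroneckerMap_apply, mul_sub]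

lemma my_sub_kronecker {l m n p : Type*} (A B : Matrix l m ℂ) (C : Matrix n p ℂ) :
    (A - B) ⊗ₖ C = A ⊗ₖ C - B ⊗ₖ C := by
  ext ⟨i₁, i₂⟩ ⟨j₁, j₂⟩
  simp [Matrix.kroneckerMap_apply, sub_mul]

lemma my_kronecker_conjTranspose {m n : Type*} (A : Matrix m m ℂ) (B : Matrix n n ℂ) :
    (A ⊗ₖ B)ᴴ = Aᴴ ⊗ₖ Bᴴ := by
  ext ⟨i₁, i₂⟩ ⟨j₁, j₂⟩
  simp [Matrix.conjTranspose_apply, Matrix.kroneckerMap_apply, mul_comm]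

lemma my_posSemidef_kronecker {m n : Type*} [Fintype m] [Fintype n] [DecidableEq m] [DecidableEq n]
    {A : Matrix m m ℂ} {B : Matrix n n ℂ}
    (hA : A.PosSemidef) (hB : B.PosSemidef) : (A ⊗ₖ B).PosSemidef := by
  exact hA.kronecker hB

lemma my_eq_zero_of_trace {m : Type*} [Fintype m] {A : Matrix m m ℂ}
    (h : (Aᴴ * A).trace = 0) : A = 0 := by
  have h' : ∑ j, ∑ i, star (A i j) * A i j = 0 := by
    simpa [Matrix.trace, Matrix.diag, Matrix.mul_apply, Matrix.conjTranspose_apply] using h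
  have hnn : ∀ j ∈ Finset.univ, (0:ℂ) ≤ ∑ i, star (A i j) * A i j := fun j _ =>
    Finset.sum_nonneg fun i _ => star_mul_self_nonneg _
  ext i j
  have h1 := (Finset.sum_eq_zero_iff_of_nonneg hnn).mp h' j (Finset.mem_univ j)
  have h2 := (Finset.sum_eq_zero_iff_of_nonneg
    (fun i _ => star_mul_self_nonneg (A i j))).mp h1 i (Finset.mem_univ i)
  rcases mul_eq_zero.mp h2 with h3 | h3
  · simpa using star_eq_zero.mp h3
  · simpa using h3

open scoped MatrixOrder in
lemma my_psd_mul_eq_zero {m : Type*} [Fintype m] [DecidableEq m] {M R : Matrix m m ℂ}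
    (hM : M.PosSemidef) (hR : R.PosSemidef) (h : (M * R).trace = 0) : M * R = 0 := by
  have hSh : (CFC.sqrt M)ᴴ = CFC.sqrt M :=
    (Matrix.nonneg_iff_posSemidef.mp (CFC.sqrt_nonneg M)).1.eq
  have hTh : (CFC.sqrt R)ᴴ = CFC.sqrt R :=
    (Matrix.nonneg_iff_posSemidef.mp (CFC.sqrt_nonneg R)).1.eq
  set S := CFC.sqrt M with hSdef
  set T := CFC.sqrt R with hTdef
  have hMS : S * S = M := CFC.sqrt_mul_sqrt_self M hM.nonneg
  have hRT : T * T = R := CFC.sqrt_mul_sqrt_self R hR.nonneg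
  have key : T * S = 0 := by
    apply my_eq_zero_of_trace
    have hadj : (T * S)ᴴ = S * T := by
      rw [Matrix.conjTranspose_mul, hSh, hTh]
    rw [hadj]
    calc (S * T * (T * S)).trace
        = ((T * S) * (S * T)).trace := Matrix.trace_mul_comm _ _
      _ = (T * (S * (S * T))).trace := by simp only [Matrix.mul_assoc]
      _ = ((S * (S * T)) * T).trace := Matrix.trace_mul_comm _ _
      _ = (M * R).trace := by rw [← hMS, ← hRT]; simp only [Matrix.mul_assoc]
      _ = 0 := h
  have : S * T = 0 := by
    have := congrArg Matrix.conjTranspose key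
    rwa [Matrix.conjTranspose_mul, hSh, hTh,
      Matrix.conjTranspose_zero] at this
  rw [← hMS, ← hRT]
  calc S * S * (T * T) = S * (S * T) * T := by simp only [Matrix.mul_assoc]
    _ = 0 := by rw [this, Matrix.mul_zero, Matrix.zero_mul]

end Aux

/-- Theorem 8 of the paper: no two-input two-output quantum box gives rise to singular
disagreement. -/
theorem quantum_2x2_no_singular_disagreement
    (p : Fin 2 → Fin 2 → Fin 2 → Fin 2 → ℝ)
    (hbox : IsBox p) (hq : IsQuantum p) :
    ¬ SingularDisagreement p := by
  rintro ⟨hcorr, hpos, -, hAeq, -, hBz⟩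
  obtain ⟨dA, dB, hdA, hdB, ρ, E, F, hρ, hρtr, hE, hEsum, hF, hFsum, hp⟩ := hq
  -- from hAeq: p 0 0 0 1 = 0
  have z3 : p 0 0 0 1 = 0 := by
    rw [Fin.sum_univ_two] at hAeq; linarith
  -- generic: a zero probability kills the corresponding matrix product
  have key : ∀ (a b x y : Fin 2), p a b x y = 0 → (E x a ⊗ₖ F y b) * ρ = 0 := by
    intro a b x y h
    refine my_psd_mul_eq_zero (my_posSemidef_kronecker (hE x a) (hF y b)) hρ ?_
    rw [hp a b x y, h, Complex.ofReal_zero]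
  have h1 : (E 1 1 ⊗ₖ F 1 0) * ρ = 0 := key 1 0 1 1 (hcorr 1 0 (by decide))
  have h2 : (E 1 0 ⊗ₖ F 1 1) * ρ = 0 := key 0 1 1 1 (hcorr 0 1 (by decide))
  have h3 : (E 1 1 ⊗ₖ F 0 0) * ρ = 0 := key 1 0 1 0 hBz
  have h4 : (E 0 0 ⊗ₖ F 1 0) * ρ = 0 := key 0 0 0 1 z3
  have e10 : E 1 0 = 1 - E 1 1 := by
    have := hEsum 1; rw [Fin.sum_univ_two] at this
    linear_combination (norm := noncomm_ring) this
  have f10 : F 1 0 = 1 - F 1 1 := by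
    have := hFsum 1; rw [Fin.sum_univ_two] at this
    linear_combination (norm := noncomm_ring) this
  have d1 : (E 1 1 ⊗ₖ (1 : Matrix (Fin dB) (Fin dB) ℂ)) * ρ = (E 1 1 ⊗ₖ F 1 1) * ρ := by
    rw [f10, my_kronecker_sub, sub_mul, sub_eq_zero] at h1
    exact h1
  have d2 : ((1 : Matrix (Fin dA) (Fin dA) ℂ) ⊗ₖ F 1 1) * ρ = (E 1 1 ⊗ₖ F 1 1) * ρ := by
    rw [e10, my_sub_kronecker, sub_mul, sub_eq_zero] at h2
    exact h2
  -- commutation helpers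
  have comm : ∀ (X : Matrix (Fin dA) (Fin dA) ℂ) (Y : Matrix (Fin dB) (Fin dB) ℂ),
      ((1 : Matrix (Fin dA) (Fin dA) ℂ) ⊗ₖ Y) * (X ⊗ₖ (1 : Matrix (Fin dB) (Fin dB) ℂ))
        = X ⊗ₖ Y := by
    intro X Y
    rw [← Matrix.mul_kronecker_mul, one_mul, mul_one]
  have comm' : ∀ (X : Matrix (Fin dA) (Fin dA) ℂ) (Y : Matrix (Fin dB) (Fin dB) ℂ),
      (X ⊗ₖ (1 : Matrix (Fin dB) (Fin dB) ℂ)) * ((1 : Matrix (Fin dA) (Fin dA) ℂ) ⊗ₖ Y)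
        = X ⊗ₖ Y := by
    intro X Y
    rw [← Matrix.mul_kronecker_mul, one_mul, mul_one]
  have d3 : ((1 : Matrix (Fin dA) (Fin dA) ℂ) ⊗ₖ F 0 0) *
      (((1 : Matrix (Fin dA) (Fin dA) ℂ) ⊗ₖ F 1 1) * ρ) = 0 := by
    rw [d2, ← Matrix.mul_assoc]
    have : (E 1 1 ⊗ₖ F 1 1) = (E 1 1 ⊗ₖ (1 : Matrix (Fin dB) (Fin dB) ℂ)) *
        ((1 : Matrix (Fin dA) (Fin dA) ℂ) ⊗ₖ F 1 1) := (comm' _ _).symm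
    calc ((1 : Matrix (Fin dA) (Fin dA) ℂ) ⊗ₖ F 0 0) * (E 1 1 ⊗ₖ F 1 1) * ρ
        = ((1 : Matrix (Fin dA) (Fin dA) ℂ) ⊗ₖ F 0 0) * ((E 1 1 ⊗ₖ F 1 1) * ρ) := by
          rw [Matrix.mul_assoc]
      _ = ((1 : Matrix (Fin dA) (Fin dA) ℂ) ⊗ₖ F 0 0) *
            ((E 1 1 ⊗ₖ (1 : Matrix (Fin dB) (Fin dB) ℂ)) * ρ) := by rw [← d1]
      _ = (((1 : Matrix (Fin dA) (Fin dA) ℂ) ⊗ₖ F 0 0) *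
            (E 1 1 ⊗ₖ (1 : Matrix (Fin dB) (Fin dB) ℂ))) * ρ := by rw [Matrix.mul_assoc]
      _ = (E 1 1 ⊗ₖ F 0 0) * ρ := by rw [comm]
      _ = 0 := h3
  have d4 : (E 0 0 ⊗ₖ (1 : Matrix (Fin dB) (Fin dB) ℂ)) * ρ = (E 0 0 ⊗ₖ F 1 1) * ρ := by
    rw [f10, my_kronecker_sub, sub_mul, sub_eq_zero] at h4
    exact h4
  have final : (E 0 0 ⊗ₖ F 0 0) * ρ = 0 := by
    calc (E 0 0 ⊗ₖ F 0 0) * ρ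
        = ((1 : Matrix (Fin dA) (Fin dA) ℂ) ⊗ₖ F 0 0) *
            ((E 0 0 ⊗ₖ (1 : Matrix (Fin dB) (Fin dB) ℂ)) * ρ) := by
          rw [← Matrix.mul_assoc, comm]
      _ = ((1 : Matrix (Fin dA) (Fin dA) ℂ) ⊗ₖ F 0 0) * ((E 0 0 ⊗ₖ F 1 1) * ρ) := by rw [d4]
      _ = ((1 : Matrix (Fin dA) (Fin dA) ℂ) ⊗ₖ F 0 0) *
            (((E 0 0 ⊗ₖ (1 : Matrix (Fin dB) (Fin dB) ℂ)) *
              ((1 : Matrix (Fin dA) (Fin dA) ℂ) ⊗ₖ F 1 1)) * ρ) := by rw [comm']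
      _ = (((1 : Matrix (Fin dA) (Fin dA) ℂ) ⊗ₖ F 0 0) *
            (E 0 0 ⊗ₖ (1 : Matrix (Fin dB) (Fin dB) ℂ))) *
            (((1 : Matrix (Fin dA) (Fin dA) ℂ) ⊗ₖ F 1 1) * ρ) := by
          simp only [Matrix.mul_assoc]
      _ = ((E 0 0 ⊗ₖ (1 : Matrix (Fin dB) (Fin dB) ℂ)) *
            ((1 : Matrix (Fin dA) (Fin dA) ℂ) ⊗ₖ F 0 0)) *
            (((1 : Matrix (Fin dA) (Fin dA) ℂ) ⊗ₖ F 1 1) * ρ) := by rw [comm, comm']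
      _ = (E 0 0 ⊗ₖ (1 : Matrix (Fin dB) (Fin dB) ℂ)) *
            (((1 : Matrix (Fin dA) (Fin dA) ℂ) ⊗ₖ F 0 0) *
              (((1 : Matrix (Fin dA) (Fin dA) ℂ) ⊗ₖ F 1 1) * ρ)) := by
          simp only [Matrix.mul_assoc]
      _ = 0 := by rw [d3, Matrix.mul_zero]
  have : (p 0 0 0 0 : ℂ) = 0 := by
    rw [← hp 0 0 0 0, final, Matrix.trace_zero]
  rw [Complex.ofReal_eq_zero] at this
  linarith
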